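/- For each n ∈ {2, 3, 4}, the bound of Theorem 1 is saturated: there exists a 2⊗n density matrix ρ (positive semidefinite, trace 1, indexed by Fin 2 × Fin n) whose partial transpose ρ^{T_A} has exactly n − 1 negative eigenvalues, counted with multiplicity. -/

import Mathlib

open Matrix
open scoped ComplexOrder

noncomputable section

/-- Partial transpose with respect to the first (qubit) factor. -/
def ptA {n : ℕ} (ρ : Matrix (Fin 2 × Fin n) (Fin 2 × Fin n) ℂ) :
    Matrix (Fin 2 × Fin n) (Fin 2 × Fin n) ℂ :=
  fun p q => ρ (q.1, p.2) (p.1, q.2)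

/-! ### Auxiliary general lemmas -/

lemma trace_eq_sum_eigs {ι : Type*} [Fintype ι] [DecidableEq ι]
    {M : Matrix ι ι ℂ} (hH : M.IsHermitian) :
    M.trace = ∑ i, (hH.eigenvalues i : ℂ) := by
  conv_lhs => rw [hH.spectral_theorem]
  rw [Unitary.conjStarAlgAut_apply, Matrix.trace_mul_cycle]
  rw [Unitary.coe_star_mul_self, Matrix.one_mul, Matrix.trace_diagonal]
  rfl

lemma eig_quad {ι : Type*} [Fintype ι] [DecidableEq ι]
    {M : Matrix ι ι ℂ} (hH : M.IsHermitian)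
    (c1 c0 : ℝ) (hq : M * M = (c1 : ℂ) • M + (c0 : ℂ) • 1) (i : ι) :
    hH.eigenvalues i ^ 2 = c1 * hH.eigenvalues i + c0 := by
  have hv := hH.mulVec_eigenvectorBasis i
  set v := ⇑(hH.eigenvectorBasis i) with hvdef
  set lam := hH.eigenvalues i with hlam
  have hvne : v ≠ 0 := by
    intro h0
    apply hH.eigenvectorBasis.orthonormal.ne_zero i
    ext j
    exact congrFun h0 j
  have hsm : ∀ (w : ι → ℂ) (r : ℝ), r • w = (r : ℂ) • w := fun w r => by
    ext j; simp [Complex.real_smul]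
  have h2 : (M * M) *ᵥ v = ((lam : ℂ) ^ 2) • v := by
    rw [← Matrix.mulVec_mulVec, hv, hsm, Matrix.mulVec_smul, hv, hsm, smul_smul, ← sq]
  rw [hq] at h2
  have h3 : ((c1 : ℂ) * lam + c0) • v = ((lam : ℂ) ^ 2) • v := by
    rw [← h2, Matrix.add_mulVec, Matrix.smul_mulVec, Matrix.smul_mulVec,
      Matrix.one_mulVec, hv, hsm, add_smul, smul_smul]
  have h4 : ((c1 : ℂ) * lam + c0) = (lam : ℂ) ^ 2 := by
    by_contra hne
    have := sub_eq_zero.mpr h3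
    rw [← sub_smul] at this
    rcases smul_eq_zero.mp this with h | h
    · exact hne (sub_eq_zero.mp h)
    · exact hvne h
  have : ((lam ^ 2 : ℝ) : ℂ) = ((c1 * lam + c0 : ℝ) : ℂ) := by push_cast; rw [← h4]
  exact_mod_cast this

lemma count_from_sum {ι : Type*} [Fintype ι] (f : ι → ℝ) (r1 r2 : ℝ)
    (h1 : r1 < 0) (h2 : 0 < r2)
    (hf : ∀ i, f i = r1 ∨ f i = r2) (k : ℕ)
    (hk : (k : ℝ) * r1 + ((Fintype.card ι : ℝ) - k) * r2 = ∑ i, f i) :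
    (Finset.univ.filter fun i => f i < 0).card = k := by
  set S := Finset.univ.filter fun i => f i < 0 with hS
  have hcard : S.card + (Finset.univ.filter fun i => ¬ f i < 0).card = Fintype.card ι := by
    rw [Finset.card_filter_add_card_filter_not]
    simp
  have hA : ∑ i ∈ S, f i = S.card * r1 := by
    rw [Finset.sum_congr rfl (fun i hi => ?_), Finset.sum_const, nsmul_eq_mul]
    rcases hf i with h | h
    · exact h
    · exfalso; have := (Finset.mem_filter.mp hi).2; rw [h] at this; linarith
  have hB : ∑ i ∈ Finset.univ.filter (fun i => ¬ f i < 0), f i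
      = ((Fintype.card ι : ℝ) - S.card) * r2 := by
    rw [Finset.sum_congr rfl (fun i hi => ?_), Finset.sum_const, nsmul_eq_mul]
    · congr 1
      have : ((Finset.univ.filter fun i => ¬ f i < 0).card : ℝ)
          = (Fintype.card ι : ℝ) - S.card := by
        push_cast [← hcard]
        ring
      rw [this]
    · rcases hf i with h | h
      · exfalso; have := (Finset.mem_filter.mp hi).2; rw [h] at this; exact this h1
      · exact h
  have hsum : ∑ i, f i = S.card * r1 + ((Fintype.card ι : ℝ) - S.card) * r2 := by
    rw [← Finset.sum_filter_add_sum_filter_not Finset.univ (fun i => f i < 0), hA, hB]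
  rw [hsum] at hk
  have hzz : ((k : ℝ) - S.card) * (r1 - r2) = 0 := by linear_combination hk
  rcases mul_eq_zero.mp hzz with h | h
  · have : (S.card : ℝ) = (k : ℝ) := by linarith [sub_eq_zero.mp h]
    exact_mod_cast this
  · exfalso; linarith [sub_eq_zero.mp h]

/-- Block matrix on `Fin 2 × Fin n`. -/
def bmat {n : ℕ} (A B C D : Matrix (Fin n) (Fin n) ℂ) :
    Matrix (Fin 2 × Fin n) (Fin 2 × Fin n) ℂ :=
  fun p q => ![![A, B], ![C, D]] p.1 q.1 p.2 q.2

/-! ### The case n = 2 -/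

def M2 : Matrix (Fin 2 × Fin 2) (Fin 2 × Fin 2) ℂ :=
  bmat !![0,0;0,1/2] !![0,1/2;0,0] !![0,0;1/2,0] !![1/2,0;0,0]

def L2 : Matrix (Fin 2 × Fin 2) (Fin 2 × Fin 2) ℂ :=
  bmat 1 0 !![0,1;0,0] 1

def d2 : Fin 2 × Fin 2 → ℝ := fun p => ![![0,1/2],![0,0]] p.1 p.2

set_option maxHeartbeats 2000000 in
lemma herm2 : M2.IsHermitian := by
  ext ⟨i, k⟩ ⟨j, l⟩
  fin_cases i <;> fin_cases j <;> fin_cases k <;> fin_cases l <;>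
    simp [M2, bmat, Matrix.conjTranspose_apply, Matrix.vecHead, Matrix.vecTail]

set_option maxHeartbeats 2000000 in
lemma fact2 : ptA M2 = L2 * Matrix.diagonal (fun p => (d2 p : ℂ)) * L2ᴴ := by
  ext ⟨i, k⟩ ⟨j, l⟩
  fin_cases i <;> fin_cases j <;> fin_cases k <;> fin_cases l <;>
    simp [M2, L2, d2, bmat, ptA, Matrix.mul_apply, Matrix.mul_diagonal, Matrix.vecHead, Matrix.vecTail,
      Fintype.sum_prod_type, Fin.sum_univ_succ, Matrix.conjTranspose_apply,
      Matrix.diagonal_apply, Matrix.one_apply, Prod.ext_iff] <;> norm_num [Fin.ext_iff, map_div₀, map_inv₀, map_ofNat]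

set_option maxHeartbeats 2000000 in
lemma quad2 : M2 * M2 = ((0 : ℝ) : ℂ) • M2 + ((1/4 : ℝ) : ℂ) • 1 := by
  ext ⟨i, k⟩ ⟨j, l⟩
  fin_cases i <;> fin_cases j <;> fin_cases k <;> fin_cases l <;>
    simp [M2, bmat, Matrix.mul_apply, Matrix.vecHead, Matrix.vecTail, Fintype.sum_prod_type, Fin.sum_univ_succ,
      Matrix.one_apply, Prod.ext_iff] <;> norm_num [Fin.ext_iff, map_div₀, map_inv₀, map_ofNat]

set_option maxHeartbeats 2000000 in
lemma tr2 : M2.trace = 1 := by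
  simp [Matrix.trace, Fintype.sum_prod_type, Fin.sum_univ_succ, M2, bmat, Matrix.vecHead, Matrix.vecTail]
  norm_num

/-! ### The case n = 3 -/

def M3 : Matrix (Fin 2 × Fin 3) (Fin 2 × Fin 3) ℂ :=
  bmat !![0,0,0;0,3/14,0;0,0,4/14] !![0,2/14,0;0,0,2/14;0,0,0]
       !![0,0,0;2/14,0,0;0,2/14,0] !![4/14,0,0;0,3/14,0;0,0,0]

def L3 : Matrix (Fin 2 × Fin 3) (Fin 2 × Fin 3) ℂ :=
  bmat 1 0 !![0,2/3,0;0,0,1/2;0,0,0] 1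

def d3 : Fin 2 × Fin 3 → ℝ := fun p => ![![0,3/14,2/7],![4/21,1/7,0]] p.1 p.2

set_option maxHeartbeats 2000000 in
lemma herm3 : M3.IsHermitian := by
  ext ⟨i, k⟩ ⟨j, l⟩
  fin_cases i <;> fin_cases j <;> fin_cases k <;> fin_cases l <;>
    simp [M3, bmat, Matrix.conjTranspose_apply, Matrix.vecHead, Matrix.vecTail]

set_option maxHeartbeats 2000000 in
lemma fact3 : ptA M3 = L3 * Matrix.diagonal (fun p => (d3 p : ℂ)) * L3ᴴ := by
  ext ⟨i, k⟩ ⟨j, l⟩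
  fin_cases i <;> fin_cases j <;> fin_cases k <;> fin_cases l <;>
    simp [M3, L3, d3, bmat, ptA, Matrix.mul_apply, Matrix.mul_diagonal, Matrix.vecHead, Matrix.vecTail,
      Fintype.sum_prod_type, Fin.sum_univ_succ, Matrix.conjTranspose_apply,
      Matrix.diagonal_apply, Matrix.one_apply, Prod.ext_iff] <;> norm_num [Fin.ext_iff, map_div₀, map_inv₀, map_ofNat]

set_option maxHeartbeats 2000000 in
lemma quad3 : M3 * M3 = ((3/14 : ℝ) : ℂ) • M3 + ((1/49 : ℝ) : ℂ) • 1 := by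
  ext ⟨i, k⟩ ⟨j, l⟩
  fin_cases i <;> fin_cases j <;> fin_cases k <;> fin_cases l <;>
    simp [M3, bmat, Matrix.mul_apply, Matrix.vecHead, Matrix.vecTail, Fintype.sum_prod_type, Fin.sum_univ_succ,
      Matrix.one_apply, Prod.ext_iff] <;> norm_num [Fin.ext_iff, map_div₀, map_inv₀, map_ofNat]

set_option maxHeartbeats 2000000 in
lemma tr3 : M3.trace = 1 := by
  simp [Matrix.trace, Fintype.sum_prod_type, Fin.sum_univ_succ, M3, bmat, Matrix.vecHead, Matrix.vecTail]
  norm_num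

/-! ### The case n = 4 -/

def M4 : Matrix (Fin 2 × Fin 4) (Fin 2 × Fin 4) ℂ :=
  bmat !![0,0,0,0;0,3/34,0,0;0,0,6/34,0;0,0,0,8/34]
       !![0,4/34,0,0;0,0,5/34,0;0,0,0,4/34;0,0,0,0]
       !![0,0,0,0;4/34,0,0,0;0,5/34,0,0;0,0,4/34,0]
       !![8/34,0,0,0;0,6/34,0,0;0,0,3/34,0;0,0,0,0]

def L4 : Matrix (Fin 2 × Fin 4) (Fin 2 × Fin 4) ℂ :=
  bmat 1 0 !![0,4/3,0,0;0,0,5/6,0;0,0,0,1/2;0,0,0,0] 1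

def d4 : Fin 2 × Fin 4 → ℝ :=
  fun p => ![![0,3/34,3/17,4/17],![4/51,11/204,1/34,0]] p.1 p.2

set_option maxHeartbeats 2000000 in
lemma herm4 : M4.IsHermitian := by
  ext ⟨i, k⟩ ⟨j, l⟩
  fin_cases i <;> fin_cases j <;> fin_cases k <;> fin_cases l <;>
    simp [M4, bmat, Matrix.conjTranspose_apply, Matrix.vecHead, Matrix.vecTail]

set_option maxHeartbeats 2000000 in
lemma fact4 : ptA M4 = L4 * Matrix.diagonal (fun p => (d4 p : ℂ)) * L4ᴴ := by
  ext ⟨i, k⟩ ⟨j, l⟩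
  fin_cases i <;> fin_cases j <;> fin_cases k <;> fin_cases l <;>
    simp (config := { decide := true }) [M4, L4, d4, bmat, ptA, Matrix.mul_apply, Matrix.mul_diagonal, Matrix.vecHead, Matrix.vecTail,
      Fintype.sum_prod_type, Fin.sum_univ_succ, Matrix.conjTranspose_apply,
      Matrix.diagonal_apply, Matrix.one_apply, Prod.ext_iff] <;> norm_num [Fin.ext_iff, map_div₀, map_inv₀, map_ofNat]

set_option maxHeartbeats 2000000 in
lemma quad4 : M4 * M4 = ((3/17 : ℝ) : ℂ) • M4 + ((4/289 : ℝ) : ℂ) • 1 := by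
  ext ⟨i, k⟩ ⟨j, l⟩
  fin_cases i <;> fin_cases j <;> fin_cases k <;> fin_cases l <;>
    simp [M4, bmat, Matrix.mul_apply, Matrix.vecHead, Matrix.vecTail, Fintype.sum_prod_type, Fin.sum_univ_succ,
      Matrix.one_apply, Prod.ext_iff] <;> norm_num [Fin.ext_iff, map_div₀, map_inv₀, map_ofNat]

set_option maxHeartbeats 2000000 in
lemma tr4 : M4.trace = 1 := by
  simp [Matrix.trace, Fintype.sum_prod_type, Fin.sum_univ_succ, M4, bmat, Matrix.vecHead, Matrix.vecTail]
  norm_num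

/-! ### Main theorem -/

/-- For `n ∈ {2, 3, 4}` there is a `2 ⊗ n` density matrix whose partial transpose
has exactly `n - 1` negative eigenvalues (with multiplicity). -/
theorem exists_state_saturating_bound :
    ∀ n ∈ ({2, 3, 4} : Set ℕ),
      ∃ ρ : Matrix (Fin 2 × Fin n) (Fin 2 × Fin n) ℂ,
        ρ.PosSemidef ∧ ρ.trace = 1 ∧
          ∃ hH : (ptA ρ).IsHermitian,
            (Finset.univ.filter fun i => hH.eigenvalues i < 0).card = n - 1 := by
  intro n hn
  simp only [Set.mem_insert_iff, Set.mem_singleton_iff] at hn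
  rcases hn with rfl | rfl | rfl
  · -- n = 2
    refine ⟨ptA M2, ?_, ?_, herm2, ?_⟩
    · rw [fact2]
      exact (Matrix.posSemidef_diagonal_iff.mpr fun p => by
        rcases p with ⟨i, k⟩
        fin_cases i <;> fin_cases k <;>
          exact Complex.zero_le_real.mpr (by norm_num [d2])).mul_mul_conjTranspose_same L2
    · exact tr2
    · have hroots : ∀ i, herm2.eigenvalues i = -(1/2) ∨ herm2.eigenvalues i = 1/2 := by
        intro i
        have h := eig_quad herm2 0 (1/4) quad2 i
        have h2 : (herm2.eigenvalues i - (-(1/2))) * (herm2.eigenvalues i - 1/2) = 0 := by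
          linear_combination h
        rcases mul_eq_zero.mp h2 with h | h
        · exact Or.inl (sub_eq_zero.mp h)
        · exact Or.inr (sub_eq_zero.mp h)
      have hsr : ∑ i, herm2.eigenvalues i = 1 := by
        have h1 : ((∑ i, herm2.eigenvalues i : ℝ) : ℂ) = 1 := by
          push_cast
          rw [← trace_eq_sum_eigs herm2, tr2]
        exact_mod_cast h1
      have := count_from_sum (fun i => herm2.eigenvalues i) (-(1/2)) (1/2)
        (by norm_num) (by norm_num) hroots 1
        (by simp only [Fintype.card_prod, Fintype.card_fin]; rw [hsr]; norm_num)
      convert this using 3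
      rfl
  · -- n = 3
    refine ⟨ptA M3, ?_, ?_, herm3, ?_⟩
    · rw [fact3]
      exact (Matrix.posSemidef_diagonal_iff.mpr fun p => by
        rcases p with ⟨i, k⟩
        fin_cases i <;> fin_cases k <;>
          exact Complex.zero_le_real.mpr (by norm_num [d3])).mul_mul_conjTranspose_same L3
    · exact tr3
    · have hroots : ∀ i, herm3.eigenvalues i = -(1/14) ∨ herm3.eigenvalues i = 2/7 := by
        intro i
        have h := eig_quad herm3 (3/14) (1/49) quad3 i
        have h2 : (herm3.eigenvalues i - (-(1/14))) * (herm3.eigenvalues i - 2/7) = 0 := by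
          linear_combination h
        rcases mul_eq_zero.mp h2 with h | h
        · exact Or.inl (sub_eq_zero.mp h)
        · exact Or.inr (sub_eq_zero.mp h)
      have hsr : ∑ i, herm3.eigenvalues i = 1 := by
        have h1 : ((∑ i, herm3.eigenvalues i : ℝ) : ℂ) = 1 := by
          push_cast
          rw [← trace_eq_sum_eigs herm3, tr3]
        exact_mod_cast h1
      have := count_from_sum (fun i => herm3.eigenvalues i) (-(1/14)) (2/7)
        (by norm_num) (by norm_num) hroots 2
        (by simp only [Fintype.card_prod, Fintype.card_fin]; rw [hsr]; norm_num)
      convert this using 3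
      rfl
  · -- n = 4
    refine ⟨ptA M4, ?_, ?_, herm4, ?_⟩
    · rw [fact4]
      exact (Matrix.posSemidef_diagonal_iff.mpr fun p => by
        rcases p with ⟨i, k⟩
        fin_cases i <;> fin_cases k <;>
          exact Complex.zero_le_real.mpr (by norm_num [d4])).mul_mul_conjTranspose_same L4
    · exact tr4
    · have hroots : ∀ i, herm4.eigenvalues i = -(1/17) ∨ herm4.eigenvalues i = 4/17 := by
        intro i
        have h := eig_quad herm4 (3/17) (4/289) quad4 i
        have h2 : (herm4.eigenvalues i - (-(1/17))) * (herm4.eigenvalues i - 4/17) = 0 := by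
          linear_combination h
        rcases mul_eq_zero.mp h2 with h | h
        · exact Or.inl (sub_eq_zero.mp h)
        · exact Or.inr (sub_eq_zero.mp h)
      have hsr : ∑ i, herm4.eigenvalues i = 1 := by
        have h1 : ((∑ i, herm4.eigenvalues i : ℝ) : ℂ) = 1 := by
          push_cast
          rw [← trace_eq_sum_eigs herm4, tr4]
        exact_mod_cast h1
      have := count_from_sum (fun i => herm4.eigenvalues i) (-(1/17)) (4/17)
        (by norm_num) (by norm_num) hroots 3
        (by simp only [Fintype.card_prod, Fintype.card_fin]; rw [hsr]; norm_num)
      convert this using 3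
      rfl
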